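/- There exist 2×2 symmetric positive definite real matrices A and B such that A·B ≠ B·A, and for any such pair the matrix B·A^{-1/2}·(A^{1/2}(A+B)A^{1/2})^{1/2}·A^{-1/2} is not symmetric. -/

import Mathlib

open Matrix

lemma skew_conj (X C : Matrix (Fin 2) (Fin 2) ℝ) (hX : Xᵀ = X)
    (h00 : C 0 0 = 0) (h11 : C 1 1 = 0) (h10 : C 1 0 = -C 0 1) :
    X * C * X = X.det • C := by
  have hX10 : X 1 0 = X 0 1 := by
    have := congrFun (congrFun hX 1) 0
    rw [Matrix.transpose_apply] at this
    exact this.symm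
  ext i j
  fin_cases i <;> fin_cases j <;>
    simp [Matrix.mul_apply, Fin.sum_univ_two, Matrix.det_fin_two, h00, h11, h10, hX10] <;>
    ring

lemma diag_pos {n : ℕ} {A : Matrix (Fin n) (Fin n) ℝ} (hA : A.PosDef) (i : Fin n) :
    0 < A i i := by
  have hne : (Pi.single i 1 : Fin n → ℝ) ≠ 0 := by
    intro h
    have := congrFun h i
    simp at this
  have := hA.dotProduct_mulVec_pos hne
  simpa [dotProduct, mulVec, Pi.single_apply] using this

/-- There exist 2×2 symmetric positive definite matrices A, B with A·B ≠ B·A, and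
for any such pair (with S = A^{1/2}, R = (A^{1/2}(A+B)A^{1/2})^{1/2}) the matrix
B·S⁻¹·R·S⁻¹ is not symmetric. -/
theorem stmt_16 :
    (∃ A B : Matrix (Fin 2) (Fin 2) ℝ,
      A.PosDef ∧ A.IsSymm ∧ B.PosDef ∧ B.IsSymm ∧ A * B ≠ B * A) ∧
    ∀ A B S R : Matrix (Fin 2) (Fin 2) ℝ,
      A.PosDef → A.IsSymm → B.PosDef → B.IsSymm → A * B ≠ B * A →
      S.PosDef → S.IsSymm → S * S = A →
      R.PosDef → R.IsSymm → R * R = S * (A + B) * S →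
      ¬ (B * S⁻¹ * R * S⁻¹).IsSymm := by
  constructor
  · refine ⟨!![2,0;0,1], !![1,1;1,2], ?_, ?_, ?_, ?_, ?_⟩
    · refine posDef_iff_dotProduct_mulVec.mpr ⟨?_, ?_⟩
      · ext i j; fin_cases i <;> fin_cases j <;> simp
      · intro x hx
        have hx' : x 0 ≠ 0 ∨ x 1 ≠ 0 := by
          by_contra h
          push_neg at h
          exact hx (funext fun i => by fin_cases i <;> simp [h.1, h.2])
        simp [dotProduct, mulVec, Fin.sum_univ_two]
        rcases hx' with h | h <;>
          nlinarith [sq_nonneg (x 0), sq_nonneg (x 1), mul_self_pos.mpr h]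
    · ext i j; fin_cases i <;> fin_cases j <;> simp
    · refine posDef_iff_dotProduct_mulVec.mpr ⟨?_, ?_⟩
      · ext i j; fin_cases i <;> fin_cases j <;> simp
      · intro x hx
        have hx' : x 0 ≠ 0 ∨ x 1 ≠ 0 := by
          by_contra h
          push_neg at h
          exact hx (funext fun i => by fin_cases i <;> simp [h.1, h.2])
        simp [dotProduct, mulVec, Fin.sum_univ_two]
        rcases hx' with h | h <;>
          nlinarith [sq_nonneg (x 0 + x 1), sq_nonneg (x 0), sq_nonneg (x 1),
            mul_self_pos.mpr h]
    · ext i j; fin_cases i <;> fin_cases j <;> simp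
    · intro h
      have := congrFun (congrFun h 0) 1
      simp [Matrix.mul_apply, Fin.sum_univ_two] at this
  · intro A B S R hA hAs hB hBs hAB hS hSs hSS hR hRs hRR hM
    have hdS : IsUnit S.det := isUnit_iff_ne_zero.mpr hS.det_pos.ne'
    set X : Matrix (Fin 2) (Fin 2) ℝ := S⁻¹ * R * S⁻¹ with hXdef
    have hSinvT : (S⁻¹)ᵀ = S⁻¹ := by
      rw [Matrix.transpose_nonsing_inv, hSs]
    have hXT : Xᵀ = X := by
      rw [hXdef, Matrix.transpose_mul, Matrix.transpose_mul, hSinvT, hRs.eq]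
      rw [Matrix.mul_assoc]
    have hBX : B * X = X * B := by
      have := hM.eq
      rw [Matrix.transpose_mul, Matrix.transpose_mul, Matrix.transpose_mul,
        hSinvT, hRs.eq, hBs.eq] at this
      calc B * X = B * S⁻¹ * R * S⁻¹ := by rw [hXdef]; noncomm_ring
        _ = S⁻¹ * R * S⁻¹ * B := by rw [← this]; noncomm_ring
        _ = X * B := by rw [hXdef]
    have hXAX : X * A * X = A + B := by
      have : X * A * X = S⁻¹ * (R * R) * S⁻¹ := by
        rw [hXdef, ← hSS]
        calc S⁻¹ * R * S⁻¹ * (S * S) * (S⁻¹ * R * S⁻¹)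
            = S⁻¹ * R * (S⁻¹ * S) * (S * S⁻¹) * R * S⁻¹ := by noncomm_ring
          _ = S⁻¹ * (R * R) * S⁻¹ := by
              rw [Matrix.nonsing_inv_mul _ hdS, Matrix.mul_nonsing_inv _ hdS]; noncomm_ring
      rw [this, hRR]
      calc S⁻¹ * (S * (A + B) * S) * S⁻¹
          = (S⁻¹ * S) * (A + B) * (S * S⁻¹) := by noncomm_ring
        _ = A + B := by
            rw [Matrix.nonsing_inv_mul _ hdS, Matrix.mul_nonsing_inv _ hdS]; noncomm_ring
    set C : Matrix (Fin 2) (Fin 2) ℝ := B * A - A * B with hCdef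
    have hCne : C ≠ 0 := sub_ne_zero.mpr (Ne.symm hAB)
    have hXCX : X * C * X = C := by
      have h1 : B * (X * A * X) = X * (B * A) * X := by
        calc B * (X * A * X) = (B * X) * A * X := by noncomm_ring
          _ = X * (B * A) * X := by rw [hBX]; noncomm_ring
      have h2 : (X * A * X) * B = X * (A * B) * X := by
        calc (X * A * X) * B = X * A * (X * B) := by noncomm_ring
          _ = X * (A * B) * X := by rw [← hBX]; noncomm_ring
      have h3 : B * (A + B) - (A + B) * B = C := by rw [hCdef]; noncomm_ring
      calc X * C * X = X * (B * A) * X - X * (A * B) * X := by rw [hCdef]; noncomm_ring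
        _ = B * (X * A * X) - (X * A * X) * B := by rw [h1, h2]
        _ = C := by rw [hXAX, h3]
    have hCT : Cᵀ = -C := by
      rw [hCdef, Matrix.transpose_sub, Matrix.transpose_mul, Matrix.transpose_mul,
        hAs.eq, hBs.eq]
      noncomm_ring
    have h00 : C 0 0 = 0 := by
      have := congrFun (congrFun hCT 0) 0
      simp [Matrix.transpose_apply] at this
      linarith
    have h11 : C 1 1 = 0 := by
      have := congrFun (congrFun hCT 1) 1
      simp [Matrix.transpose_apply] at this
      linarith
    have h10 : C 1 0 = -C 0 1 := by
      have := congrFun (congrFun hCT 0) 1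
      simpa [Matrix.transpose_apply] using this
    have hsmul : X.det • C = C := by
      rw [← skew_conj X C hXT h00 h11 h10, hXCX]
    have hdX : X.det = 1 := by
      by_contra h
      apply hCne
      have : (X.det - 1) • C = 0 := by
        rw [sub_smul, one_smul, hsmul, sub_self]
      rcases smul_eq_zero.mp this with h' | h'
      · exact absurd (by linarith [sub_eq_zero.mp h']) h
      · exact h'
    have hdet : A.det = (A + B).det := by
      have := congrArg Matrix.det hXAX
      rw [Matrix.det_mul, Matrix.det_mul, hdX] at this
      linarith
    have ha00 := diag_pos hA 0
    have ha11 := diag_pos hA 1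
    have hb00 := diag_pos hB 0
    have hb11 := diag_pos hB 1
    have hdA := hA.det_pos
    have hdB := hB.det_pos
    have hA10 : A 1 0 = A 0 1 := by
      have := congrFun (congrFun hAs.eq 1) 0
      rw [Matrix.transpose_apply] at this
      exact this.symm
    have hB10 : B 1 0 = B 0 1 := by
      have := congrFun (congrFun hBs.eq 1) 0
      rw [Matrix.transpose_apply] at this
      exact this.symm
    simp only [Matrix.det_fin_two, Matrix.add_apply] at hdet hdA hdB
    simp only [hA10, hB10] at hdet hdA hdB
    nlinarith [sq_nonneg (A 0 0 * B 1 1 - A 1 1 * B 0 0), mul_pos hdA hdB,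
      mul_pos ha00 hb11, mul_pos ha11 hb00, sq_nonneg (A 0 1 * B 0 1)]
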